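/- Let m ≥ 2 and let ≺ be a linear order on {1,…,m−1}. Suppose there exists t ∈ {1,…,m−1} such that t ≺ t+1 ≺ t+2 ≺ ⋯ ≺ m−1 and t ≺ t−1 ≺ t−2 ≺ ⋯ ≺ 1. Then 𝔣𝔯(𝓕[≺]) ≤ 1. -/

import Mathlib

open Cardinal

noncomputable section

/-- The underlying set of the ordinal `ω_n`, the least ordinal of cardinality `ℵ_n`,
realized as a type. -/
abbrev OmegaN (n : ℕ) : Type := ((Cardinal.aleph n).ord).ToType

/-- `n` is *free* for the family `𝓕` of finite sets: for every set mapping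
`S : [ω_n]^{<ω} → [ω_n]^{<ω}` there is a bijection `u` from `⋃ 𝓕` onto a subset
`Y = u '' (⋃ 𝓕)` of `ω_n` such that `S (u '' A) ∩ Y ⊆ u '' A` for all `A ∈ 𝓕`. -/
def IsFree {α : Type*} [DecidableEq α] (𝓕 : Finset (Finset α)) (n : ℕ) : Prop :=
  ∀ S : Finset (OmegaN n) → Finset (OmegaN n),
    ∃ u : α → OmegaN n, Set.InjOn u ↑(𝓕.sup id) ∧
      ∀ A ∈ 𝓕, S (A.image u) ∩ (𝓕.sup id).image u ⊆ A.image u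

/-- The index `𝔣𝔯 𝓕`: the least `n` which is free for `𝓕`. -/
noncomputable def fr {α : Type*} [DecidableEq α] (𝓕 : Finset (Finset α)) : ℕ :=
  sInf {n | IsFree 𝓕 n}

/-- Conditions (1)–(4) of a nested-orders family on `X`,
where a sequence `(t₁, …, t_k)` is represented by the list `[t₁, …, t_k]`. -/
def NestedBase {α : Type*} (X : Set α) (S : Set (List α)) : Prop :=
  (∀ l ∈ S, ∀ x ∈ l, x ∈ X) ∧
  (∀ t ∈ X, [t] ∈ S) ∧
  (∀ l ∈ S, l.Nodup) ∧
  (∀ (l : List α) (t : α), l ++ [t] ∈ S → l ∈ S) ∧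
  (∀ (l : List α) (s t : α), l ++ [s, t] ∈ S → l ++ [t] ∈ S) ∧
  (∀ (l : List α) (s t u : α), l ++ [s, t] ∈ S → l ++ [t, u] ∈ S → l ++ [s, u] ∈ S)

/-- A nested-orders family on `X`: conditions (1)–(5). -/
def IsNestedOrders {α : Type*} (X : Set α) (S : Set (List α)) : Prop :=
  NestedBase X S ∧
  ∀ (l : List α) (s t : α), l ++ [t] ∈ S → l ++ [s] ∈ S → t ≠ s →
    (l ++ [t, s] ∈ S ∨ l ++ [s, t] ∈ S)

/-- An `n`-nested-orders family on `X`: sequences of length at most `n+2`,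
conditions (1)–(4), and condition (5) for `k < n`. -/
def IsNNestedOrders {α : Type*} (n : ℕ) (X : Set α) (S : Set (List α)) : Prop :=
  NestedBase X S ∧
  (∀ l ∈ S, l.length ≤ n + 2) ∧
  ∀ (l : List α) (s t : α), l.length < n → l ++ [t] ∈ S → l ++ [s] ∈ S → t ≠ s →
    (l ++ [t, s] ∈ S ∨ l ++ [s, t] ∈ S)

/-- `A` satisfies the defining condition of membership in `𝓕_{𝔖,n}`: whenever
`(t₁, …, t_{n+2}) ∈ 𝔖` and `t₁, …, t_{n+1} ∈ A`, also `t_{n+2} ∈ A`. -/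
def MemFam {α : Type*} (n : ℕ) (S : Set (List α)) (A : Finset α) : Prop :=
  ∀ (l : List α) (t : α), l.length = n + 1 → l ++ [t] ∈ S →
    (∀ x ∈ l, x ∈ A) → t ∈ A

/-- The index `𝔫𝔬 𝓕`: the least `n` for which there is an `n`-nested-orders family `𝔖`
on `⋃ 𝓕` with `𝓕 ⊆ 𝓕_{𝔖,n}`. -/
noncomputable def no {α : Type*} [DecidableEq α] (𝓕 : Finset (Finset α)) : ℕ :=
  sInf {n | ∃ S : Set (List α),
    IsNNestedOrders n ↑(𝓕.sup id) S ∧ ∀ A ∈ 𝓕, MemFam n S A}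

namespace Free19

abbrev K : Type := OmegaN 1

lemma mk_K : #K = Cardinal.aleph 1 := by
  rw [Cardinal.mk_toType, Cardinal.card_ord, Nat.cast_one]

lemma countable_Iic (x : K) : (Set.Iic x).Countable := by
  have h1 : (Set.Iio x).Countable := by
    rw [Cardinal.countable_iff_lt_aleph_one]
    simpa using Cardinal.mk_Iio_ord_toType x
  have : Set.Iic x = insert x (Set.Iio x) := by
    ext z; simp [le_iff_lt_or_eq, or_comm]
  rw [this]; exact h1.insert x

lemma exists_bound {C : Set K} (h : C.Countable) : ∃ b : K, ∀ c ∈ C, c < b := by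
  by_contra hb
  push_neg at hb
  have huniv : (Set.univ : Set K).Countable := by
    have : (Set.univ : Set K) ⊆ ⋃ c ∈ C, Set.Iic c := by
      intro x _
      obtain ⟨c, hc, hxc⟩ := hb x
      exact Set.mem_biUnion hc hxc
    exact ((h.biUnion fun c _ => countable_Iic c).mono this)
  have h2 : #(Set.univ : Set K) < Cardinal.aleph 1 := by
    rw [← Cardinal.countable_iff_lt_aleph_one]; exact huniv
  rw [Cardinal.mk_univ, mk_K] at h2
  exact lt_irrefl _ h2

lemma not_countable_Ioi (x : K) : ¬ (Set.Ioi x).Countable := by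
  intro h
  have : (Set.univ : Set K).Countable := by
    have : (Set.univ : Set K) = Set.Iic x ∪ Set.Ioi x := by
      ext z; simp [le_or_gt]
    rw [this]; exact (countable_Iic x).union h
  have h2 : #(Set.univ : Set K) < Cardinal.aleph 1 := by
    rw [← Cardinal.countable_iff_lt_aleph_one]; exact this
  rw [Cardinal.mk_univ, mk_K] at h2
  exact lt_irrefl _ h2

lemma exists_mem_gt {B : Set K} (h : ¬ B.Countable) (b : K) : ∃ z ∈ B, b < z := by
  by_contra hc
  push_neg at hc
  exact h ((countable_Iic b).mono hc)

lemma infinite_of_not_countable {B : Set K} (h : ¬ B.Countable) : B.Infinite := by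
  by_contra h2
  exact h (Set.not_infinite.mp h2).countable

lemma nonempty_of_not_countable {B : Set K} (h : ¬ B.Countable) : B.Nonempty :=
  (infinite_of_not_countable h).nonempty

lemma countable_finsets {W : Set K} (h : W.Countable) :
    {F : Finset K | ↑F ⊆ W}.Countable := by
  have h2 := Set.countable_setOf_finite_subset h
  have : {F : Finset K | ↑F ⊆ W} ⊆ (fun t : Finset K => (↑t : Set K)) ⁻¹'
      {t | t.Finite ∧ t ⊆ W} := by
    intro F hF; exact ⟨F.finite_toSet, hF⟩
  exact (h2.preimage Finset.coe_injective).mono this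

lemma exists_step (S : Finset K → Finset K) :
    ∃ stp : K → K, ∀ x : K, x < stp x ∧
      ∀ F : Finset K, ↑F ⊆ Set.Iic x → ∀ s ∈ S F, s < stp x := by
  have key : ∀ x : K, ∃ b : K, x < b ∧
      ∀ F : Finset K, ↑F ⊆ Set.Iic x → ∀ s ∈ S F, s < b := by
    intro x
    have hcnt : (Set.Iic x ∪ ⋃ F ∈ {F : Finset K | ↑F ⊆ Set.Iic x}, (↑(S F) : Set K)).Countable := by
      refine (countable_Iic x).union ?_
      exact (countable_finsets (countable_Iic x)).biUnion fun F _ => (S F).countable_toSet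
    obtain ⟨b, hb⟩ := exists_bound hcnt
    refine ⟨b, hb x (Set.mem_union_left _ Set.self_mem_Iic), fun F hF s hs => ?_⟩
    exact hb s (Set.mem_union_right _ (Set.mem_biUnion hF (by simpa using hs)))
  choose stp hstp using key
  exact ⟨stp, fun x => ⟨(hstp x).1, (hstp x).2⟩⟩


/-- order / blocks -/
def ltt (m : ℕ) (prec : ℕ → ℕ → Prop) (a b : ℕ) : Prop :=
  (b = m ∧ a ≠ m) ∨ (a ≠ m ∧ b ≠ m ∧ prec a b)

structure Facts (m t : ℕ) (prec : ℕ → ℕ → Prop) (𝓕 : Finset (Finset ℕ)) : Prop where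
  hm : 2 ≤ m
  ht1 : 1 ≤ t
  htm : t ≤ m - 1
  asymm : ∀ a ∈ Finset.Icc 1 m, ∀ b ∈ Finset.Icc 1 m,
    ltt m prec a b → ¬ ltt m prec b a
  total : ∀ a ∈ Finset.Icc 1 m, ∀ b ∈ Finset.Icc 1 m, a ≠ b →
    ltt m prec a b ∨ ltt m prec b a
  trans : ∀ a ∈ Finset.Icc 1 m, ∀ b ∈ Finset.Icc 1 m, ∀ c ∈ Finset.Icc 1 m,
    ltt m prec a b → ltt m prec b c → ltt m prec a c
  low : ∀ a b : ℕ, 1 ≤ a → a < b → b ≤ t → ltt m prec b a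
  up : ∀ a b : ℕ, t ≤ a → a < b → b ≤ m → ltt m prec a b
  lt_of_ltt : ∀ a ∈ Finset.Icc 1 m, ∀ b ∈ Finset.Icc 1 m,
    ltt m prec a b → t < b → a < b
  Fsub : ∀ A ∈ 𝓕, A ⊆ Finset.Icc 1 m
  Ffact : ∀ A ∈ 𝓕, ∀ j ∈ Finset.Icc 1 m, j ∉ A → ∀ M ∈ A, ∀ x ∈ A,
    x < M → j < M → ltt m prec x j

structure Inv (m t : ℕ) (prec : ℕ → ℕ → Prop) (𝓕 : Finset (Finset ℕ))
    (S : Finset K → Finset K) (stp : K → K) (c : ℕ → K)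
    (D : Finset ℕ) (y : ℕ → K) (B : ℕ → Set K) : Prop where
  subP : D ⊆ Finset.Icc 1 m
  initSeg : ∀ q ∈ D, ∀ r ∈ Finset.Icc 1 m, r ∉ D → ltt m prec q r
  blocks : ∀ p ∈ D, p ≤ t → ∃ i : ℕ, y p = stp^[i+1] (c p)
  mono : ∀ p ∈ D, ∀ q ∈ D, p < q → y p < y q
  upsBig : ∀ p ∈ D, t < p → c (t+1) < y p
  upsFree : ∀ p ∈ D, t < p → ∀ F : Finset K,
      (↑F ⊆ Set.Iic (c (t+1)) ∪ y '' {q | q ∈ Finset.Icc 1 m ∧ ltt m prec q p}) →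
      ∀ s ∈ S F, s < y p
  pools : ∀ M ∈ Finset.Icc 1 m, M ∉ D → t < M → ¬ (B M).Countable
  cond : ∀ A ∈ 𝓕, ∀ j ∈ D, j ∉ A → ∀ M ∈ A, j < M → (∀ x ∈ A, x ≤ M) →
      (M ∈ D → y j ∉ (S (A.image y) : Finset K)) ∧
      (M ∉ D → t < M ∧ ∀ z ∈ B M, y j ∉ (S (insert z ((A.erase M).image y)) : Finset K))

section Iter
variable (stp : K → K) (hstp : ∀ x : K, x < stp x)

include hstp in
lemma lt_iterate (x : K) (i : ℕ) : x < stp^[i+1] x := by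
  induction i with
  | zero => simpa using hstp x
  | succ i ih =>
    rw [Function.iterate_succ_apply']
    exact ih.trans (hstp _)

include hstp in
lemma iterate_strictMono (x : K) : StrictMono (fun i : ℕ => stp^[i+1] x) := by
  apply strictMono_nat_of_lt_succ
  intro n
  have h := hstp (stp^[n+1] x)
  have e : stp^[n+1+1] x = stp (stp^[n+1] x) := Function.iterate_succ_apply' stp (n+1) x
  rw [e]
  exact h

include hstp in
lemma le_iterate (x : K) (i : ℕ) : stp x ≤ stp^[i+1] x := by
  induction i with
  | zero => simp
  | succ i ih =>
    rw [Function.iterate_succ_apply']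
    exact ih.trans (le_of_lt (hstp _))
end Iter

lemma exists_ltt_min (m t : ℕ) (prec : ℕ → ℕ → Prop) (𝓕 : Finset (Finset ℕ))
    (fx : Facts m t prec 𝓕) (Q : Finset ℕ) (hQ : Q.Nonempty)
    (hQP : Q ⊆ Finset.Icc 1 m) :
    ∃ p ∈ Q, ∀ q ∈ Q, q ≠ p → ltt m prec p q := by
  classical
  set P := Finset.Icc 1 m with hP
  let rank : ℕ → ℕ := fun x => (P.filter (fun q => ltt m prec q x)).card
  obtain ⟨p, hpQ, hpmin⟩ := Q.exists_min_image rank hQ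
  refine ⟨p, hpQ, fun q hq hqp => ?_⟩
  rcases fx.total p (hQP hpQ) q (hQP hq) (fun h => hqp h.symm) with h | h
  · exact h
  · exfalso
    have hsub : P.filter (fun r => ltt m prec r q) ⊂ P.filter (fun r => ltt m prec r p) := by
      constructor
      · intro r hr
        rw [Finset.mem_filter] at hr ⊢
        exact ⟨hr.1, fx.trans r hr.1 q (hQP hq) p (hQP hpQ) hr.2 h⟩
      · intro hcon
        have hqmem : q ∈ P.filter (fun r => ltt m prec r p) :=
          Finset.mem_filter.2 ⟨hQP hq, h⟩
        have := hcon hqmem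
        rw [Finset.mem_filter] at this
        exact fx.asymm q (hQP hq) q (hQP hq) this.2 this.2
    have := Finset.card_lt_card hsub
    have h2 := hpmin q hq
    simp only [rank] at h2
    omega

open Classical in
lemma trap (S : Finset K → Finset K) (Ms : Finset ℕ) (B : ℕ → Set K)
    (hB : ∀ M ∈ Ms, ¬ (B M).Countable)
    (G : ℕ → Finset (Finset K)) {C : Set K} (hC : C.Infinite) :
    ∃ w ∈ C, ∀ M ∈ Ms,
      ¬ {z ∈ B M | ∀ Kk ∈ G M, w ∉ (S (insert z Kk) : Finset K)}.Countable := by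
  by_contra hcon
  push_neg at hcon
  -- for each w ∈ C there is a bad M
  have hbad : ∀ w ∈ C, ∃ M ∈ Ms,
      {z ∈ B M | ∀ Kk ∈ G M, w ∉ (S (insert z Kk) : Finset K)}.Countable := by
    intro w hw
    obtain ⟨M, hM1, hM2⟩ := hcon w hw
    exact ⟨M, hM1, hM2⟩
  classical
  let f := hC.natEmbedding
  let JG : K → ℕ → Set K := fun w M =>
    {z ∈ B M | ∀ Kk ∈ G M, w ∉ (S (insert z Kk) : Finset K)}
  let U : ℕ → Set K := fun M => ⋃ n : ℕ,
    (if (JG (f n) M).Countable then JG (f n) M else ∅)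
  have hU : ∀ M, (U M).Countable := by
    intro M
    refine Set.countable_iUnion fun n => ?_
    by_cases h : (JG (f n) M).Countable
    · simpa [U, h]
    · simp [U, h]
  have hz : ∀ M ∈ Ms, ∃ z : K, z ∈ B M ∧ z ∉ U M := by
    intro M hM
    have : ¬ (B M ⊆ U M) := fun hsub => hB M hM ((hU M).mono hsub)
    rw [Set.not_subset] at this
    obtain ⟨z, hz1, hz2⟩ := this
    exact ⟨z, hz1, hz2⟩
  obtain ⟨z0⟩ : Nonempty K := ⟨(f 0 : C).1⟩
  let zf : ℕ → K := fun M => if h : M ∈ Ms then (hz M h).choose else z0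
  have hzf : ∀ M ∈ Ms, zf M ∈ B M ∧ zf M ∉ U M := by
    intro M hM
    simpa [zf, hM] using (hz M hM).choose_spec
  let T : Finset K := Ms.biUnion fun M => (G M).biUnion fun Kk => S (insert (zf M) Kk)
  have hmem : ∀ n : ℕ, (f n : K) ∈ (T : Finset K) := by
    intro n
    obtain ⟨M, hM, hMc⟩ := hbad (f n) (f n).2
    have h1 := hzf M hM
    have h2 : zf M ∉ JG (f n) M := by
      intro hin
      apply h1.2
      refine Set.mem_iUnion.2 ⟨n, ?_⟩
      rw [if_pos hMc]
      exact hin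
    have h3 : ∃ Kk ∈ G M, (f n : K) ∈ (S (insert (zf M) Kk) : Finset K) := by
      by_contra hno
      push_neg at hno
      exact h2 ⟨h1.1, fun Kk hKk => hno Kk hKk⟩
    obtain ⟨Kk, hKk, hfn⟩ := h3
    exact Finset.mem_biUnion.2 ⟨M, hM, Finset.mem_biUnion.2 ⟨Kk, hKk, hfn⟩⟩
  have hinj : Function.Injective (fun n => ((f n : K))) := by
    intro a b hab
    exact f.injective (Subtype.ext hab)
  have := Set.infinite_of_injective_forall_mem hinj (fun n => by
    exact Finset.mem_coe.2 (hmem n))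
  exact this T.finite_toSet

lemma step_core
    (m t : ℕ) (prec : ℕ → ℕ → Prop) (𝓕 : Finset (Finset ℕ))
    (S : Finset K → Finset K) (stp : K → K) (c : ℕ → K)
    (fx : Facts m t prec 𝓕)
    (hstp : ∀ x : K, x < stp x)
    (hcb : ∀ n : ℕ, ∀ i : ℕ, stp^[i+1] (c n) < c (n+1))
    (D : Finset ℕ) (y : ℕ → K) (B : ℕ → Set K)
    (inv : Inv m t prec 𝓕 S stp c D y B)
    (p : ℕ) (hp : p ∈ Finset.Icc 1 m) (hpD : p ∉ D)
    (hmin : ∀ q ∈ Finset.Icc 1 m, q ∉ D → q ≠ p → ltt m prec p q)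
    (w : K)
    (hwB : t < p → w ∈ B p)
    (hwblk : p ≤ t → ∃ i : ℕ, w = stp^[i+1] (c p))
    (hwBig : t < p → c (t+1) < w)
    (hwFree : t < p → ∀ F : Finset K,
       (↑F ⊆ Set.Iic (c (t+1)) ∪ y '' ↑D) → ∀ s ∈ S F, s < w)
    (hmonoW : ∀ q ∈ D, (q < p → y q < w) ∧ (p < q → w < y q))
    (hwΛ : ∀ A ∈ 𝓕, A ⊆ D → p ∉ A → w ∉ (S (A.image y) : Finset K))
    (hGood : ∀ M ∈ Finset.Icc 1 m, M ∉ D → M ≠ p → t < M →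
      ¬ {z ∈ B M | ∀ A ∈ 𝓕, p ∉ A → M ∈ A → p < M → (∀ x ∈ A, x ≤ M) →
          w ∉ (S (insert z ((A.erase M).image y)) : Finset K)}.Countable) :
    Inv m t prec 𝓕 S stp c (insert p D) (Function.update y p w)
      (fun M => {z ∈ B M | ∀ A ∈ 𝓕, p ∉ A → M ∈ A → p < M → (∀ x ∈ A, x ≤ M) →
          w ∉ (S (insert z ((A.erase M).image y)) : Finset K)}) := by
  classical
  set P := Finset.Icc 1 m with hPdef
  set y' := Function.update y p w with hy'def
  have hyq : ∀ q, q ≠ p → y' q = y q := by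
    intro q hq; simp [hy'def, Function.update_of_ne hq]
  have hyp : y' p = w := by simp [hy'def]
  have hyD : ∀ q ∈ D, y' q = y q := fun q hq => hyq q (fun h => hpD (h ▸ hq))
  have himg : ∀ A : Finset ℕ, A ⊆ D → A.image y' = A.image y := by
    intro A hA
    apply Finset.image_congr
    intro x hx
    exact hyD x (hA hx)
  -- elements of A other than M are decided
  have hxD : ∀ A ∈ 𝓕, ∀ j, j ∈ P → j ∉ A → (j ∈ D ∨ j = p) →
      ∀ M ∈ A, j < M → (∀ x ∈ A, x ≤ M) → A.erase M ⊆ D := by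
    intro A hA j hjP hjA hjdp M hM hjM hMmax x hx
    rw [Finset.mem_erase] at hx
    have hxA := hx.2
    have hxP : x ∈ P := fx.Fsub A hA hxA
    have hxM : x < M := lt_of_le_of_ne (hMmax x hxA) hx.1
    have hltt : ltt m prec x j := fx.Ffact A hA j hjP hjA M hM x hxA hxM hjM
    by_contra hxD
    rcases hjdp with hjD | rfl
    · exact fx.asymm x hxP j hjP hltt (inv.initSeg j hjD x hxP hxD)
    · have hxj : x ≠ j := fun h => hjA (h ▸ hxA)
      exact fx.asymm x hxP j hjP hltt (hmin x hxP hxD hxj)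
  -- all of P with ltt · p is in D
  have hlttD : ∀ q, q ∈ P → ltt m prec q p → q ∈ D := by
    intro q hqP hq
    by_contra hqD
    by_cases hqp : q = p
    · subst hqp; exact fx.asymm q hqP q hqP hq hq
    · exact fx.asymm q hqP p hp hq (hmin q hqP hqD hqp)
  constructor
  case subP =>
    intro q hq
    rcases Finset.mem_insert.1 hq with rfl | hq
    · exact hp
    · exact inv.subP hq
  case initSeg =>
    intro q hq r hrP hrD
    have hrp : r ≠ p := fun h => hrD (h ▸ Finset.mem_insert_self p D)
    have hrD' : r ∉ D := fun h => hrD (Finset.mem_insert_of_mem h)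
    rcases Finset.mem_insert.1 hq with rfl | hq
    · exact hmin r hrP hrD' hrp
    · exact inv.initSeg q hq r hrP hrD'
  case blocks =>
    intro q hq hqt
    rcases Finset.mem_insert.1 hq with rfl | hq
    · rw [hyp]; exact hwblk hqt
    · rw [hyD q hq]; exact inv.blocks q hq hqt
  case mono =>
    intro a ha b hb hab
    rcases Finset.mem_insert.1 ha with rfl | ha'
    · rcases Finset.mem_insert.1 hb with rfl | hb'
      · exact absurd hab (lt_irrefl _)
      · rw [hyp, hyD b hb']; exact (hmonoW b hb').2 hab
    · rcases Finset.mem_insert.1 hb with rfl | hb'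
      · rw [hyp, hyD a ha']; exact (hmonoW a ha').1 hab
      · rw [hyD a ha', hyD b hb']; exact inv.mono a ha' b hb' hab
  case upsBig =>
    intro q hq hqt
    rcases Finset.mem_insert.1 hq with rfl | hq
    · rw [hyp]; exact hwBig hqt
    · rw [hyD q hq]; exact inv.upsBig q hq hqt
  case upsFree =>
    intro q hq hqt F hF s hs
    rcases Finset.mem_insert.1 hq with rfl | hq
    · rw [hyp]
      refine hwFree hqt F ?_ s hs
      intro f hf
      rcases hF hf with h | ⟨x, ⟨hxP, hxltt⟩, rfl⟩
      · exact Set.mem_union_left _ h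
      · have hxDmem : x ∈ D := hlttD x hxP hxltt
        exact Set.mem_union_right _ ⟨x, hxDmem, (hyD x hxDmem).symm⟩
    · rw [hyD q hq]
      refine inv.upsFree q hq hqt F ?_ s hs
      intro f hf
      rcases hF hf with h | ⟨x, ⟨hxP, hxltt⟩, rfl⟩
      · exact Set.mem_union_left _ h
      · have hxDmem : x ∈ D := by
          by_contra hxD
          by_cases hxq : x = q
          · subst hxq; exact fx.asymm x hxP x hxP hxltt hxltt
          · exact fx.asymm x hxP q (inv.subP hq) hxltt
              (inv.initSeg q hq x hxP hxD)
        exact Set.mem_union_right _ ⟨x, ⟨hxP, hxltt⟩, (hyD x hxDmem).symm⟩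
  case pools =>
    intro M hMP hMD hMt
    have hMD' : M ∉ D := fun h => hMD (Finset.mem_insert_of_mem h)
    have hMp : M ≠ p := fun h => hMD (h ▸ Finset.mem_insert_self p D)
    exact hGood M hMP hMD' hMp hMt
  case cond =>
    intro A hA j hj hjA M hM hjM hMmax
    have hAP := fx.Fsub A hA
    have hMP : M ∈ P := hAP hM
    rcases Finset.mem_insert.1 hj with rfl | hjD
    · -- new point j = p
      have hMp : M ≠ j := fun h => hjA (h ▸ hM)
      have herase : A.erase M ⊆ D :=
        hxD A hA j hp hjA (Or.inr rfl) M hM hjM hMmax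
      have heq : (A.erase M).image y' = (A.erase M).image y := himg _ herase
      constructor
      · intro hMD'
        rcases Finset.mem_insert.1 hMD' with h | hMD
        · exact absurd h hMp
        · have hAD : A ⊆ D := by
            intro x hx
            by_cases hxM : x = M
            · subst hxM; exact hMD
            · exact herase (Finset.mem_erase.2 ⟨hxM, hx⟩)
          rw [hyp, himg A hAD]
          exact hwΛ A hA hAD hjA
      · intro hMD'
        have hMD : M ∉ D := fun h => hMD' (Finset.mem_insert_of_mem h)
        have hj1 : 1 ≤ j := (Finset.mem_Icc.1 hp).1
        have hMt : t < M := by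
          by_contra hMt'
          push_neg at hMt'
          have h1 : ltt m prec M j := fx.low j M hj1 hjM hMt'
          exact fx.asymm M hMP j hp h1 (hmin M hMP hMD hMp)
        refine ⟨hMt, ?_⟩
        intro z hz
        rw [hyp, heq]
        exact hz.2 A hA hjA hM hjM hMmax
    · -- old point j ∈ D
      have hjP : j ∈ P := inv.subP hjD
      have hjp : j ≠ p := fun h => hpD (h ▸ hjD)
      have herase : A.erase M ⊆ D :=
        hxD A hA j hjP hjA (Or.inl hjD) M hM hjM hMmax
      have heq : (A.erase M).image y' = (A.erase M).image y := himg _ herase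
      have hyj : y' j = y j := hyD j hjD
      obtain ⟨hc1, hc2⟩ := inv.cond A hA j hjD hjA M hM hjM hMmax
      constructor
      · intro hMD'
        rcases Finset.mem_insert.1 hMD' with hMeq | hMD
        · subst hMeq
          obtain ⟨hMt, hpend⟩ := hc2 hpD
          have himgA : A.image y' = insert w ((A.erase M).image y) := by
            conv_lhs => rw [← Finset.insert_erase hM]
            rw [Finset.image_insert, hyp, heq]
          rw [hyj, himgA]
          exact hpend w (hwB hMt)
        · have hAD : A ⊆ D := by
            intro x hx
            by_cases hxM : x = M
            · subst hxM; exact hMD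
            · exact herase (Finset.mem_erase.2 ⟨hxM, hx⟩)
          rw [hyj, himg A hAD]
          exact hc1 hMD
      · intro hMD'
        have hMD : M ∉ D := fun h => hMD' (Finset.mem_insert_of_mem h)
        obtain ⟨hMt, hpend⟩ := hc2 hMD
        refine ⟨hMt, ?_⟩
        intro z hz
        rw [hyj, heq]
        exact hpend z hz.1


lemma step_exists
    (m t : ℕ) (prec : ℕ → ℕ → Prop) (𝓕 : Finset (Finset ℕ))
    (S : Finset K → Finset K) (stp : K → K) (c : ℕ → K)
    (fx : Facts m t prec 𝓕)
    (hstp : ∀ x : K, x < stp x)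
    (hstp2 : ∀ x : K, ∀ F : Finset K, ↑F ⊆ Set.Iic x → ∀ s ∈ S F, s < stp x)
    (hcb : ∀ n : ℕ, ∀ i : ℕ, stp^[i+1] (c n) < c (n+1))
    (D : Finset ℕ) (y : ℕ → K) (B : ℕ → Set K)
    (inv : Inv m t prec 𝓕 S stp c D y B)
    (p : ℕ) (hp : p ∈ Finset.Icc 1 m) (hpD : p ∉ D)
    (hmin : ∀ q ∈ Finset.Icc 1 m, q ∉ D → q ≠ p → ltt m prec p q) :
    ∃ y' B', Inv m t prec 𝓕 S stp c (insert p D) y' B' := by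
  classical
  set P := Finset.Icc 1 m with hPdef
  have hcmono : ∀ a b : ℕ, a ≤ b → c a ≤ c b := by
    have h1 : ∀ n : ℕ, c n < c (n+1) := by
      intro n
      exact (hstp (c n)).trans (by simpa using hcb n 0)
    intro a b hab
    exact (monotone_nat_of_le_succ (fun n => (h1 n).le)) hab
  -- avoid set
  set Λ : Finset K := (𝓕.filter (fun A => A ⊆ D)).biUnion (fun A => S (A.image y))
    with hΛdef
  have hΛsub : ∀ A ∈ 𝓕, A ⊆ D → ∀ s ∈ S (A.image y), s ∈ Λ := by
    intro A hA hAD s hs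
    exact Finset.mem_biUnion.2 ⟨A, Finset.mem_filter.2 ⟨hA, hAD⟩, hs⟩
  -- pools of interest
  set Ms : Finset ℕ := P.filter (fun M => M ∉ D ∧ M ≠ p ∧ t < M) with hMsdef
  have hMsB : ∀ M ∈ Ms, ¬ (B M).Countable := by
    intro M hM
    rw [hMsdef, Finset.mem_filter] at hM
    exact inv.pools M hM.1 hM.2.1 hM.2.2.2
  set G : ℕ → Finset (Finset K) := fun M =>
    (𝓕.filter (fun A => p ∉ A ∧ M ∈ A ∧ p < M ∧ ∀ x ∈ A, x ≤ M)).image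
      (fun A => (A.erase M).image y) with hGdef
  -- translation of the goodness set
  have hJG : ∀ (w : K) (M : ℕ),
      {z ∈ B M | ∀ Kk ∈ G M, w ∉ (S (insert z Kk) : Finset K)} =
      {z ∈ B M | ∀ A ∈ 𝓕, p ∉ A → M ∈ A → p < M → (∀ x ∈ A, x ≤ M) →
          w ∉ (S (insert z ((A.erase M).image y)) : Finset K)} := by
    intro w M
    ext z
    simp only [Set.mem_setOf_eq, and_congr_right_iff]
    intro hzB
    constructor
    · intro h A hA h1 h2 h3 h4
      refine h _ ?_
      rw [hGdef]
      exact Finset.mem_image.2 ⟨A, Finset.mem_filter.2 ⟨hA, h1, h2, h3, h4⟩, rfl⟩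
    · intro h Kk hKk
      rw [hGdef] at hKk
      obtain ⟨A, hAf, rfl⟩ := Finset.mem_image.1 hKk
      rw [Finset.mem_filter] at hAf
      exact h A hAf.1 hAf.2.1 hAf.2.2.1 hAf.2.2.2.1 hAf.2.2.2.2
  by_cases hupt : t < p
  · -- upper point: choose above a bound
    have hBp : ¬ (B p).Countable := inv.pools p hp hpD hupt
    have hcnt : (Set.Iic (c (t+1)) ∪ y '' ↑D).Countable :=
      (countable_Iic _).union ((D.finite_toSet.image y).countable)
    obtain ⟨c2, hc2⟩ := exists_bound hcnt
    set θ := stp c2 with hθdef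
    have hc2θ : c2 < θ := hstp c2
    have hBpθ : ¬ (B p ∩ Set.Ioi θ).Countable := by
      intro hcc
      apply hBp
      have : B p ⊆ (B p ∩ Set.Ioi θ) ∪ Set.Iic θ := by
        intro z hz
        rcases le_or_gt z θ with h | h
        · exact Set.mem_union_right _ h
        · exact Set.mem_union_left _ ⟨hz, h⟩
      exact ((hcc.union (countable_Iic θ)).mono this)
    have hCinf : ((B p ∩ Set.Ioi θ) \ ↑Λ).Infinite :=
      (infinite_of_not_countable hBpθ).diff Λ.finite_toSet
    obtain ⟨w, hwC, hwGood⟩ := trap S Ms B hMsB G hCinf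
    have hwBp : w ∈ B p := hwC.1.1
    have hwθ : θ < w := hwC.1.2
    have hwΛ' : w ∉ (↑Λ : Set K) := hwC.2
    refine ⟨_, _, step_core m t prec 𝓕 S stp c fx hstp hcb D y B inv p hp hpD hmin w
      (fun _ => hwBp) (fun h => absurd h (by omega)) ?_ ?_ ?_ ?_ ?_⟩
    · intro _
      exact (hc2 (c (t+1)) (Set.mem_union_left _ Set.self_mem_Iic)).trans
        (hc2θ.trans hwθ)
    · intro _ F hF s hs
      have : ↑F ⊆ Set.Iic c2 := by
        intro f hf
        exact le_of_lt (hc2 f (hF hf))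
      exact (hstp2 c2 F this s hs).trans hwθ
    · intro q hq
      constructor
      · intro _
        have : y q < c2 := hc2 (y q) (Set.mem_union_right _ ⟨q, hq, rfl⟩)
        exact this.trans (hc2θ.trans hwθ)
      · intro hpq
        exfalso
        have h1 : ltt m prec q p := inv.initSeg q hq p hp hpD
        have h2 : q < p := fx.lt_of_ltt q (inv.subP hq) p hp h1 hupt
        omega
    · intro A hA hAD hpA
      intro hmem
      exact hwΛ' (hΛsub A hA hAD w hmem)
    · intro M hMP hMD hMp hMt
      rw [← hJG w M]
      refine hwGood M ?_
      rw [hMsdef, Finset.mem_filter]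
      exact ⟨hMP, hMD, hMp, hMt⟩
  · -- low point: choose from the block
    push_neg at hupt
    have hblkinf : (Set.range (fun i : ℕ => stp^[i+1] (c p))).Infinite :=
      Set.infinite_range_of_injective (iterate_strictMono stp hstp (c p)).injective
    have hCinf : ((Set.range (fun i : ℕ => stp^[i+1] (c p))) \ ↑Λ).Infinite :=
      hblkinf.diff Λ.finite_toSet
    obtain ⟨w, hwC, hwGood⟩ := trap S Ms B hMsB G hCinf
    obtain ⟨i, hi⟩ := hwC.1
    have hwΛ' : w ∉ (↑Λ : Set K) := hwC.2
    have hwcp1 : w < c (p+1) := by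
      rw [← hi]; exact hcb p i
    refine ⟨_, _, step_core m t prec 𝓕 S stp c fx hstp hcb D y B inv p hp hpD hmin w
      (fun h => absurd h (by omega)) (fun _ => ⟨i, hi.symm⟩)
      (fun h => absurd h (by omega)) (fun h => absurd h (by omega)) ?_ ?_ ?_⟩
    · intro q hq
      have h1 : ltt m prec q p := inv.initSeg q hq p hp hpD
      constructor
      · intro hqp
        exfalso
        have hq1 : 1 ≤ q := (Finset.mem_Icc.1 (inv.subP hq)).1
        by_cases hqt : q ≤ t
        · have h2 : ltt m prec p q := fx.low q p hq1 hqp hupt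
          exact fx.asymm q (inv.subP hq) p hp h1 h2
        · omega
      · intro hpq
        by_cases hqt : q ≤ t
        · obtain ⟨iq, hiq⟩ := inv.blocks q hq hqt
          have h3 : c q < y q := by
            rw [hiq]; exact lt_iterate stp hstp (c q) iq
          have h4 : c (p+1) ≤ c q := hcmono (p+1) q hpq
          exact hwcp1.trans_le (h4.trans h3.le)
        · push_neg at hqt
          have h3 : c (t+1) < y q := inv.upsBig q hq hqt
          have h4 : c (p+1) ≤ c (t+1) := hcmono (p+1) (t+1) (by omega)
          exact (hwcp1.trans_le h4).trans h3
    · intro A hA hAD hpA hmem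
      exact hwΛ' (hΛsub A hA hAD w hmem)
    · intro M hMP hMD hMp hMt
      rw [← hJG w M]
      refine hwGood M ?_
      rw [hMsdef, Finset.mem_filter]
      exact ⟨hMP, hMD, hMp, hMt⟩

lemma grow
    (m t : ℕ) (prec : ℕ → ℕ → Prop) (𝓕 : Finset (Finset ℕ))
    (S : Finset K → Finset K) (stp : K → K) (c : ℕ → K)
    (fx : Facts m t prec 𝓕)
    (hstp : ∀ x : K, x < stp x)
    (hstp2 : ∀ x : K, ∀ F : Finset K, ↑F ⊆ Set.Iic x → ∀ s ∈ S F, s < stp x)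
    (hcb : ∀ n : ℕ, ∀ i : ℕ, stp^[i+1] (c n) < c (n+1)) :
    ∀ n : ℕ, ∀ (D : Finset ℕ) (y : ℕ → K) (B : ℕ → Set K),
      Inv m t prec 𝓕 S stp c D y B → (Finset.Icc 1 m \ D).card ≤ n →
      ∃ y' B', Inv m t prec 𝓕 S stp c (Finset.Icc 1 m) y' B' := by
  intro n
  induction n with
  | zero =>
    intro D y B inv hcard
    have hempty : Finset.Icc 1 m \ D = ∅ := Finset.card_eq_zero.1 (by omega)
    have hDP : D = Finset.Icc 1 m :=
      Finset.Subset.antisymm inv.subP (Finset.sdiff_eq_empty_iff_subset.1 hempty)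
    exact ⟨y, B, hDP ▸ inv⟩
  | succ n ih =>
    intro D y B inv hcard
    by_cases hsub : Finset.Icc 1 m ⊆ D
    · have hDP : D = Finset.Icc 1 m := Finset.Subset.antisymm inv.subP hsub
      exact ⟨y, B, hDP ▸ inv⟩
    · have hne : (Finset.Icc 1 m \ D).Nonempty := by
        rwa [Finset.sdiff_nonempty]
      obtain ⟨p, hpQ, hpmin⟩ := exists_ltt_min m t prec 𝓕 fx _ hne Finset.sdiff_subset
      rw [Finset.mem_sdiff] at hpQ
      have hmin : ∀ q ∈ Finset.Icc 1 m, q ∉ D → q ≠ p → ltt m prec p q := by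
        intro q hq hqD hqp
        exact hpmin q (Finset.mem_sdiff.2 ⟨hq, hqD⟩) hqp
      obtain ⟨y', B', inv'⟩ := step_exists m t prec 𝓕 S stp c fx hstp hstp2 hcb
        D y B inv p hpQ.1 hpQ.2 hmin
      refine ih _ y' B' inv' ?_
      have h1 : Finset.Icc 1 m \ insert p D = (Finset.Icc 1 m \ D).erase p := by
        ext q
        simp only [Finset.mem_sdiff, Finset.mem_erase, Finset.mem_insert]
        tauto
      rw [h1, Finset.card_erase_of_mem (Finset.mem_sdiff.2 ⟨hpQ.1, hpQ.2⟩)]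
      omega

lemma final
    (m t : ℕ) (prec : ℕ → ℕ → Prop) (𝓕 : Finset (Finset ℕ))
    (S : Finset K → Finset K) (stp : K → K) (c : ℕ → K)
    (fx : Facts m t prec 𝓕)
    (hstp : ∀ x : K, x < stp x)
    (hstp2 : ∀ x : K, ∀ F : Finset K, ↑F ⊆ Set.Iic x → ∀ s ∈ S F, s < stp x)
    (hcb : ∀ n : ℕ, ∀ i : ℕ, stp^[i+1] (c n) < c (n+1))
    (y : ℕ → K) (B : ℕ → Set K)
    (inv : Inv m t prec 𝓕 S stp c (Finset.Icc 1 m) y B) :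
    (∀ A ∈ 𝓕, ∀ j ∈ Finset.Icc 1 m, j ∉ A → y j ∉ (S (A.image y) : Finset K)) ∧
    Set.InjOn y ↑(Finset.Icc 1 m) := by
  have hcmono : ∀ a b : ℕ, a ≤ b → c a ≤ c b := by
    have h1 : ∀ n : ℕ, c n < c (n+1) := by
      intro n
      exact (hstp (c n)).trans (by simpa using hcb n 0)
    intro a b hab
    exact (monotone_nat_of_le_succ (fun n => (h1 n).le)) hab
  constructor
  · intro A hA j hj hjA
    by_cases hup : ∃ x ∈ A, j < x
    · -- some element of A above j : use cond with the maximum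
      obtain ⟨x0, hx0A, hx0⟩ := hup
      have hAne : A.Nonempty := ⟨x0, hx0A⟩
      set M := A.max' hAne with hMdef
      have hMA : M ∈ A := A.max'_mem hAne
      have hjM : j < M := lt_of_lt_of_le hx0 (A.le_max' x0 hx0A)
      have hMmax : ∀ x ∈ A, x ≤ M := fun x hx => A.le_max' x hx
      exact (inv.cond A hA j hj hjA M hMA hjM hMmax).1 (fx.Fsub A hA hMA)
    · push_neg at hup
      have hxj : ∀ x ∈ A, x < j := by
        intro x hx
        exact lt_of_le_of_ne (hup x hx) (fun h => hjA (h ▸ hx))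
      by_cases hjt : j ≤ t
      · -- low target, ladder bound
        obtain ⟨ij, hij⟩ := inv.blocks j hj hjt
        have hsubF : ↑(A.image y) ⊆ Set.Iic (c j) := by
          intro f hf
          rw [Finset.coe_image] at hf
          obtain ⟨x, hx, rfl⟩ := hf
          rw [Finset.mem_coe] at hx
          have hxt : x < j := hxj x hx
          obtain ⟨ix, hix⟩ := inv.blocks x (fx.Fsub A hA hx) (by omega)
          have h1 : y x < c (x+1) := by rw [hix]; exact hcb x ix
          have h2 : c (x+1) ≤ c j := hcmono _ _ (by omega)
          exact le_of_lt (lt_of_lt_of_le h1 h2)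
        intro hmem
        have h3 : y j < stp (c j) := hstp2 (c j) (A.image y) hsubF (y j) hmem
        have h4 : stp (c j) ≤ y j := by
          rw [hij]; exact le_iterate stp hstp (c j) ij
        exact absurd h3 (not_lt.2 h4)
      · push_neg at hjt
        intro hmem
        have h5 : y j < y j := by
          refine inv.upsFree j hj hjt (A.image y) ?_ (y j) hmem
          intro f hf
          rw [Finset.coe_image] at hf
          obtain ⟨x, hx, rfl⟩ := hf
          rw [Finset.mem_coe] at hx
          have hxP := fx.Fsub A hA hx
          by_cases hxt : x ≤ t
          · obtain ⟨ix, hix⟩ := inv.blocks x hxP hxt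
            have h1 : y x < c (x+1) := by rw [hix]; exact hcb x ix
            have h2 : c (x+1) ≤ c (t+1) := hcmono _ _ (by omega)
            exact Set.mem_union_left _ (le_of_lt (lt_of_lt_of_le h1 h2))
          · push_neg at hxt
            have hltt : ltt m prec x j :=
              fx.up x j (by omega) (hxj x hx) (Finset.mem_Icc.1 hj).2
            exact Set.mem_union_right _ ⟨x, ⟨hxP, hltt⟩, rfl⟩
        exact absurd h5 (lt_irrefl _)
  · intro a ha b hb hab
    rw [Finset.mem_coe] at ha hb
    by_contra hne
    rcases lt_or_gt_of_ne hne with h | h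
    · exact absurd hab (ne_of_lt (inv.mono a ha b hb h))
    · exact absurd hab.symm (ne_of_lt (inv.mono b hb a ha h))

end Free19

open Free19 in
/-- Theorem 6.1: let `≺` be a linear order on `{1, …, m-1}` admitting `t` with
`t ≺ t+1 ≺ ⋯ ≺ m-1` and `t ≺ t-1 ≺ ⋯ ≺ 1`. Then `𝔣𝔯 (𝓕[≺]) ≤ 1`, where
`A ∈ 𝓕[≺]` iff `A ⊆ {1, …, m}` and for all `t₁, t₂, t₃ ∈ {1, …, m}` with `t₂ < t₁`,
`t₃ < t₁` and `t₃ ≺ t₂`, if `t₁ ∈ A` and `t₂ ∈ A` then `t₃ ∈ A`. -/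
theorem statement19 (m : ℕ) (hm : 2 ≤ m) (prec : ℕ → ℕ → Prop)
    (hirr : ∀ a ∈ Finset.Icc 1 (m - 1), ¬prec a a)
    (htrans : ∀ a ∈ Finset.Icc 1 (m - 1), ∀ b ∈ Finset.Icc 1 (m - 1),
      ∀ c ∈ Finset.Icc 1 (m - 1), prec a b → prec b c → prec a c)
    (htot : ∀ a ∈ Finset.Icc 1 (m - 1), ∀ b ∈ Finset.Icc 1 (m - 1), a ≠ b →
      prec a b ∨ prec b a)
    (t : ℕ) (ht : t ∈ Finset.Icc 1 (m - 1))
    (hup : ∀ s, t ≤ s → s + 1 ≤ m - 1 → prec s (s + 1))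
    (hdown : ∀ s, 2 ≤ s → s ≤ t → prec s (s - 1))
    (𝓕 : Finset (Finset ℕ))
    (h𝓕 : ∀ A : Finset ℕ, A ∈ 𝓕 ↔ (A ⊆ Finset.Icc 1 m ∧
      ∀ t₁ ∈ Finset.Icc 1 m, ∀ t₂ ∈ Finset.Icc 1 m, ∀ t₃ ∈ Finset.Icc 1 m,
        t₂ < t₁ → t₃ < t₁ → prec t₃ t₂ → t₁ ∈ A → t₂ ∈ A → t₃ ∈ A)) :
    fr 𝓕 ≤ 1 := by
  refine Nat.sInf_le ?_
  intro S
  have ht1 : 1 ≤ t := (Finset.mem_Icc.1 ht).1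
  have htm : t ≤ m - 1 := (Finset.mem_Icc.1 ht).2
  have hmem1 : ∀ a : ℕ, 1 ≤ a → a ≤ m - 1 → a ∈ Finset.Icc 1 (m-1) := by
    intro a h1 h2; exact Finset.mem_Icc.2 ⟨h1, h2⟩
  -- chains
  have hupP : ∀ k a : ℕ, t ≤ a → a + k + 1 ≤ m - 1 → prec a (a + k + 1) := by
    intro k
    induction k with
    | zero => intro a h1 h2; exact hup a h1 h2
    | succ k ih =>
      intro a h1 h2
      have h3 : prec a (a + k + 1) := ih a h1 (by omega)
      have h4 : prec (a + k + 1) (a + k + 2) := hup (a + k + 1) (by omega) (by omega)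
      have h5 : prec a (a + k + 2) :=
        htrans a (hmem1 a (by omega) (by omega)) (a+k+1) (hmem1 _ (by omega) (by omega))
          (a+k+2) (hmem1 _ (by omega) (by omega)) h3 h4
      have : a + (k+1) + 1 = a + k + 2 := by omega
      rw [this]; exact h5
  have hlowP : ∀ k a b : ℕ, 1 ≤ a → a + k + 1 = b → b ≤ t → prec b a := by
    intro k
    induction k with
    | zero =>
      intro a b h1 h2 h3
      have hb2 : 2 ≤ b := by omega
      have := hdown b hb2 h3
      have ha : a = b - 1 := by omega
      rw [ha]; exact this
    | succ k ih =>
      intro a b h1 h2 h3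
      have h4 : prec b (a + 1) := ih (a+1) b (by omega) (by omega) h3
      have h5 : prec (a + 1) a := by
        have := hdown (a+1) (by omega) (by omega)
        simpa using this
      exact htrans b (hmem1 b (by omega) (by omega)) (a+1) (hmem1 _ (by omega) (by omega))
        a (hmem1 a (by omega) (by omega)) h4 h5
  have hprec_lt : ∀ a b : ℕ, a ∈ Finset.Icc 1 (m-1) → b ∈ Finset.Icc 1 (m-1) →
      prec a b → t < b → a < b := by
    intro a b haI hbI hab htb
    rw [Finset.mem_Icc] at haI hbI
    by_contra hcon
    push_neg at hcon
    rcases Nat.lt_or_ge b a with h | h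
    · have h2 : prec b a := by
        have := hupP (a - b - 1) b (by omega) (by omega)
        rwa [show b + (a - b - 1) + 1 = a by omega] at this
      have h3 : prec a a := htrans a (hmem1 a haI.1 haI.2) b (hmem1 b hbI.1 hbI.2)
        a (hmem1 a haI.1 haI.2) hab h2
      exact hirr a (hmem1 a haI.1 haI.2) h3
    · have : a = b := by omega
      subst this
      exact hirr a (hmem1 a haI.1 haI.2) hab
  have hmem' : ∀ a : ℕ, a ∈ Finset.Icc 1 m → a ≠ m → a ∈ Finset.Icc 1 (m-1) := by
    intro a ha hne
    rw [Finset.mem_Icc] at ha ⊢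
    omega
  -- the Facts structure
  have fx : Facts m t prec 𝓕 := by
    constructor
    case hm => exact hm
    case ht1 => exact ht1
    case htm => exact htm
    case asymm =>
      intro a ha b hb h1 h2
      rcases h1 with ⟨hbm, ham⟩ | ⟨ham, hbm, hab⟩
      · rcases h2 with ⟨ham2, hbm2⟩ | ⟨hbm2, ham2, hba⟩
        · exact ham ham2
        · exact hbm2 hbm
      · rcases h2 with ⟨ham2, hbm2⟩ | ⟨hbm2, ham2, hba⟩
        · exact ham ham2
        · have := htrans a (hmem' a ha ham) b (hmem' b hb hbm) a (hmem' a ha ham) hab hba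
          exact hirr a (hmem' a ha ham) this
    case total =>
      intro a ha b hb hne
      by_cases ham : a = m
      · subst ham
        exact Or.inr (Or.inl ⟨rfl, fun h => hne h.symm⟩)
      · by_cases hbm : b = m
        · subst hbm
          exact Or.inl (Or.inl ⟨rfl, ham⟩)
        · rcases htot a (hmem' a ha ham) b (hmem' b hb hbm) hne with h | h
          · exact Or.inl (Or.inr ⟨ham, hbm, h⟩)
          · exact Or.inr (Or.inr ⟨hbm, ham, h⟩)
    case trans =>
      intro a ha b hb c hc h1 h2
      rcases h1 with ⟨hbm, ham⟩ | ⟨ham, hbm, hab⟩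
      · rcases h2 with ⟨hcm, hbm2⟩ | ⟨hbm2, hcm, hbc⟩
        · exact absurd hbm hbm2
        · exact absurd hbm hbm2
      · rcases h2 with ⟨hcm, hbm2⟩ | ⟨hbm2, hcm, hbc⟩
        · exact Or.inl ⟨hcm, ham⟩
        · exact Or.inr ⟨ham, hcm, htrans a (hmem' a ha ham) b (hmem' b hb hbm)
            c (hmem' c hc hcm) hab hbc⟩
    case low =>
      intro a b h1 h2 h3
      refine Or.inr ⟨by omega, by omega, ?_⟩
      exact hlowP (b - a - 1) a b h1 (by omega) h3
    case up =>
      intro a b h1 h2 h3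
      by_cases hbm : b = m
      · exact Or.inl ⟨hbm, by omega⟩
      · refine Or.inr ⟨by omega, hbm, ?_⟩
        have := hupP (b - a - 1) a h1 (by omega)
        have he : a + (b - a - 1) + 1 = b := by omega
        rwa [he] at this
    case lt_of_ltt =>
      intro a ha b hb h1 h2
      rcases h1 with ⟨rfl, ham⟩ | ⟨ham, hbm, hab⟩
      · rw [Finset.mem_Icc] at ha; omega
      · exact hprec_lt a b (hmem' a ha ham) (hmem' b hb hbm) hab h2
    case Fsub =>
      intro A hA
      exact ((h𝓕 A).1 hA).1
    case Ffact =>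
      intro A hA j hj hjA M hM x hx hxM hjM
      have hAP : A ⊆ Finset.Icc 1 m := ((h𝓕 A).1 hA).1
      have hxP : x ∈ Finset.Icc 1 m := hAP hx
      have hMP : M ∈ Finset.Icc 1 m := hAP hM
      have hxm : x ≠ m := by
        rw [Finset.mem_Icc] at hMP; omega
      have hjm : j ≠ m := by
        rw [Finset.mem_Icc] at hMP; omega
      have hxj : x ≠ j := fun h => hjA (h ▸ hx)
      rcases htot x (hmem' x hxP hxm) j (hmem' j hj hjm) hxj with h | h
      · exact Or.inr ⟨hxm, hjm, h⟩
      · exfalso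
        apply hjA
        exact ((h𝓕 A).1 hA).2 M hMP x hxP j hj hxM hjM h hM hx
  -- step function and ladder
  obtain ⟨stp, hstp'⟩ := exists_step S
  have hstp : ∀ x : K, x < stp x := fun x => (hstp' x).1
  have hstp2 : ∀ x : K, ∀ F : Finset K, ↑F ⊆ Set.Iic x → ∀ s ∈ S F, s < stp x :=
    fun x => (hstp' x).2
  have hKne : Nonempty K := by
    rw [← Cardinal.mk_ne_zero_iff, mk_K]
    exact (Cardinal.aleph0_pos.trans Cardinal.aleph0_lt_aleph_one).ne'
  obtain ⟨x0⟩ := hKne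
  have hnext : ∀ x : K, ∃ b : K, ∀ i : ℕ, stp^[i+1] x < b := by
    intro x
    obtain ⟨b, hb⟩ := exists_bound (Set.countable_range (fun i : ℕ => stp^[i+1] x))
    exact ⟨b, fun i => hb _ ⟨i, rfl⟩⟩
  choose nxt hnxt using hnext
  set c : ℕ → K := fun n => nxt^[n] x0 with hcdef
  have hcb : ∀ n i : ℕ, stp^[i+1] (c n) < c (n+1) := by
    intro n i
    have he : c (n+1) = nxt (c n) := Function.iterate_succ_apply' nxt n x0
    rw [he]
    exact hnxt (c n) i
  have inv0 : Inv m t prec 𝓕 S stp c ∅ (fun _ => x0) (fun _ => Set.Ioi (c (t+1))) := by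
    constructor
    case subP => exact Finset.empty_subset _
    case initSeg => intro q hq; exact absurd hq (Finset.notMem_empty q)
    case blocks => intro q hq; exact absurd hq (Finset.notMem_empty q)
    case mono => intro q hq; exact absurd hq (Finset.notMem_empty q)
    case upsBig => intro q hq; exact absurd hq (Finset.notMem_empty q)
    case upsFree => intro q hq; exact absurd hq (Finset.notMem_empty q)
    case pools => intro M _ _ _; exact not_countable_Ioi _
    case cond => intro A hA j hj; exact absurd hj (Finset.notMem_empty j)
  obtain ⟨y, B, invP⟩ := grow m t prec 𝓕 S stp c fx hstp hstp2 hcb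
    (Finset.Icc 1 m \ ∅).card ∅ (fun _ => x0) (fun _ => Set.Ioi (c (t+1))) inv0 le_rfl
  obtain ⟨hcond, hinj⟩ := final m t prec 𝓕 S stp c fx hstp hstp2 hcb y B invP
  have hIccF : Finset.Icc 1 m ∈ 𝓕 :=
    (h𝓕 _).2 ⟨Finset.Subset.refl _, fun t1 _ t2 _ t3 ht3 _ _ _ _ _ => ht3⟩
  have hsup : 𝓕.sup id = Finset.Icc 1 m := by
    apply le_antisymm
    · exact Finset.sup_le (fun A hA => ((h𝓕 A).1 hA).1)
    · exact Finset.le_sup (f := id) hIccF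
  refine ⟨y, ?_, ?_⟩
  · rw [hsup]; exact hinj
  · intro A hA x hx
    rw [hsup] at hx
    rw [Finset.mem_inter] at hx
    obtain ⟨h1, h2⟩ := hx
    obtain ⟨j, hj, rfl⟩ := Finset.mem_image.1 h2
    by_cases hjA : j ∈ A
    · exact Finset.mem_image.2 ⟨j, hjA, rfl⟩
    · exact absurd h1 (hcond A hA j hj hjA)


end
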